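/- In a proof net, if two vertices v and w are joined by a tensor (i.e. they are the two immediate subformula roots of a tensor), then any subnet having v as a port and any subnet having w as a port are disjoint. -/

import Mathlib

namespace MLL

/-- Formulas of unit-only MLL, with every connective and unit occurrence
carrying a name (a natural number). -/
inductive Formula : Type
  | one : ℕ → Formula
  | bot : ℕ → Formula
  | parr : ℕ → Formula → Formula → Formula
  | tens : ℕ → Formula → Formula → Formula
deriving DecidableEq

namespace Formula

/-- The name of the root connective/unit of a formula. -/
def name : Formula → ℕ
  | one n => n
  | bot n => n
  | parr n _ _ => n
  | tens n _ _ => n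

/-- All names occurring in a formula. -/
def names : Formula → Finset ℕ
  | one n => {n}
  | bot n => {n}
  | parr n A B => insert n (A.names ∪ B.names)
  | tens n A B => insert n (A.names ∪ B.names)

/-- All subformula occurrences of a formula. -/
def subs : Formula → List Formula
  | one n => [one n]
  | bot n => [bot n]
  | parr n A B => parr n A B :: (A.subs ++ B.subs)
  | tens n A B => tens n A B :: (A.subs ++ B.subs)

end Formula

/-- A sequent is a multiset of (named) formulas. -/
abbrev Sequent := Multiset Formula

/-- The names occurring in a sequent. -/
def seqNames (Γ : Sequent) : Finset ℕ := (Γ.map Formula.names).sup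

/-- The subformula occurrences of a sequent. -/
def seqSubs (Γ : Sequent) : Multiset Formula :=
  Γ.bind (fun A => (A.subs : Multiset Formula))

/-- `A` is a subformula occurrence of `Γ`. -/
def HasSub (Γ : Sequent) (A : Formula) : Prop := A ∈ seqSubs Γ

/-- `a` is the name of a `⊥`-occurrence of `Γ`. -/
def IsBotName (Γ : Sequent) (a : ℕ) : Prop := HasSub Γ (.bot a)

/-- `a` is the name of a `1`-occurrence of `Γ`. -/
def IsOneName (Γ : Sequent) (a : ℕ) : Prop := HasSub Γ (.one a)

/-- The sequent is well-named: all occurrences carry pairwise distinct names. -/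
def WellNamed (Γ : Sequent) : Prop := ((seqSubs Γ).map Formula.name).Nodup

/-- A linking: a function assigning to (the name of) each `⊥`-occurrence
a target name (the jump). -/
abbrev Linking := ℕ → ℕ

/-- A switching: a choice of left/right for each par occurrence. -/
abbrev Switching := ℕ → Bool

/-- The linking sends (names of) `⊥`-occurrences to names of `Γ`. -/
def ValidLinking (Γ : Sequent) (lk : Linking) : Prop :=
  ∀ a, IsBotName Γ a → lk a ∈ seqNames Γ

/-- The edges of the switching graph for `Γ`, `lk` and the switching `σ`. -/
def switchAdj (Γ : Sequent) (lk : Linking) (σ : Switching) (x y : ℕ) : Prop :=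
  (∃ A B, HasSub Γ (.tens x A B) ∧ (y = A.name ∨ y = B.name)) ∨
  (∃ A B, HasSub Γ (.parr x A B) ∧ y = (if σ x then A.name else B.name)) ∨
  (IsBotName Γ x ∧ y = lk x)

/-- The switching graph for `Γ`, `lk` and `σ`. -/
def switchGraph (Γ : Sequent) (lk : Linking) (σ : Switching) : SimpleGraph ℕ :=
  SimpleGraph.fromRel (switchAdj Γ lk σ)

/-- Correctness of a linking: every switching graph (restricted to the names of `Γ`)
is acyclic and connected, i.e. a tree.  `(Γ, lk)` is a proof net iff `Correct Γ lk`. -/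
def Correct (Γ : Sequent) (lk : Linking) : Prop :=
  ValidLinking Γ lk ∧
  ∀ σ : Switching, ((switchGraph Γ lk σ).induce {x : ℕ | x ∈ seqNames Γ}).IsTree

/-- All jumps of the linking target `1`-occurrences. -/
def TargetsOnes (Γ : Sequent) (lk : Linking) : Prop :=
  ∀ a, IsBotName Γ a → IsOneName Γ (lk a)

/-- Two correct linkings describe the same proof net (they agree on all jumps). -/
def SameNet (Γ : Sequent) (lk lk' : Linking) : Prop :=
  Correct Γ lk ∧ Correct Γ lk' ∧ ∀ a, IsBotName Γ a → lk a = lk' a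

/-- A rewiring step between proof nets: the target of exactly one jump is changed. -/
def Rewire (Γ : Sequent) (lk lk' : Linking) : Prop :=
  Correct Γ lk ∧ Correct Γ lk' ∧
  ∃ a, IsBotName Γ a ∧ lk a ≠ lk' a ∧ ∀ b, IsBotName Γ b → b ≠ a → lk b = lk' b

/-- Equivalence of proof nets over `Γ`: the equivalence relation generated by rewiring. -/
def NetEquiv (Γ : Sequent) : Linking → Linking → Prop :=
  Relation.EqvGen (fun lk lk' => SameNet Γ lk lk' ∨ Rewire Γ lk lk')

end MLL

namespace MLL

/-- `Δ` is a sub-sequent of `Γ`: a multiset of pairwise disjoint subformula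
occurrences of `Γ` (names are preserved). -/
def SubSeq (Γ Δ : Sequent) : Prop :=
  (∀ A ∈ Δ, HasSub Γ A) ∧ Δ.Pairwise (fun A B => Disjoint A.names B.names)

/-- `(Δ, lk↾Δ)` is a subnet of `(Γ, lk)`: `Δ ≤ Γ` and the restriction of the
linking to `Δ` is correct.  (Correctness of a linking only depends on its
values on the `⊥`-occurrences of the sequent, so the restriction is `lk` itself.) -/
def Subnet (Γ : Sequent) (lk : Linking) (Δ : Sequent) : Prop :=
  SubSeq Γ Δ ∧ Correct Δ lk

/-- `v` is a port of the sub-sequent `Δ`, i.e. a root vertex of `Δ`. -/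
def IsPort (Δ : Sequent) (v : ℕ) : Prop := ∃ A ∈ Δ, A.name = v

/-- `Δ ≤ Δ'` for sub-sequents: every formula of `Δ` is a subformula of a
formula of `Δ'`. -/
def SeqLE (Δ Δ' : Sequent) : Prop := ∀ A ∈ Δ, ∃ B ∈ Δ', A ∈ B.subs

/-- `Δ` is the empire of `v` in `(Γ, lk)`: the largest subnet having `v`
as a port. -/
def IsEmpire (Γ : Sequent) (lk : Linking) (v : ℕ) (Δ : Sequent) : Prop :=
  Subnet Γ lk Δ ∧ IsPort Δ v ∧
  ∀ Δ', Subnet Γ lk Δ' → IsPort Δ' v → SeqLE Δ' Δ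

end MLL
namespace MLL

open Formula in
lemma Formula.mem_subs_self (F : Formula) : F ∈ F.subs := by
  cases F <;> simp [Formula.subs]

lemma Formula.subs_sublist : ∀ {F G : Formula}, F ∈ G.subs → List.Sublist F.subs G.subs := by
  intro F G h
  induction G with
  | one n => simp [Formula.subs] at h; subst h; simp [Formula.subs]
  | bot n => simp [Formula.subs] at h; subst h; simp [Formula.subs]
  | parr n A B ihA ihB =>
    rw [Formula.subs] at h ⊢
    rcases List.mem_cons.1 h with h | h
    · subst h; rw [← Formula.subs]
    · refine List.Sublist.trans ?_ (List.sublist_cons_self _ _)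
      rcases List.mem_append.1 h with h | h
      · exact (ihA h).trans (List.sublist_append_left _ _)
      · exact (ihB h).trans (List.sublist_append_right _ _)
  | tens n A B ihA ihB =>
    rw [Formula.subs] at h ⊢
    rcases List.mem_cons.1 h with h | h
    · subst h; rw [← Formula.subs]
    · refine List.Sublist.trans ?_ (List.sublist_cons_self _ _)
      rcases List.mem_append.1 h with h | h
      · exact (ihA h).trans (List.sublist_append_left _ _)
      · exact (ihB h).trans (List.sublist_append_right _ _)

lemma Formula.name_mem_names (F : Formula) : F.name ∈ F.names := by
  cases F <;> simp [Formula.name, Formula.names]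

lemma Formula.mem_names_iff {F : Formula} {n : ℕ} :
    n ∈ F.names ↔ ∃ H ∈ F.subs, H.name = n := by
  induction F with
  | one m => simp [Formula.names, Formula.subs, Formula.name, eq_comm]
  | bot m => simp [Formula.names, Formula.subs, Formula.name, eq_comm]
  | parr m A B ihA ihB =>
    simp only [Formula.names, Formula.subs, Finset.mem_insert, Finset.mem_union, ihA, ihB,
      List.mem_cons, List.mem_append]
    constructor
    · rintro (rfl | ⟨H, hH, rfl⟩ | ⟨H, hH, rfl⟩)
      · exact ⟨_, Or.inl rfl, rfl⟩
      · exact ⟨H, Or.inr (Or.inl hH), rfl⟩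
      · exact ⟨H, Or.inr (Or.inr hH), rfl⟩
    · rintro ⟨H, (rfl | hH | hH), rfl⟩
      · exact Or.inl rfl
      · exact Or.inr (Or.inl ⟨H, hH, rfl⟩)
      · exact Or.inr (Or.inr ⟨H, hH, rfl⟩)
  | tens m A B ihA ihB =>
    simp only [Formula.names, Formula.subs, Finset.mem_insert, Finset.mem_union, ihA, ihB,
      List.mem_cons, List.mem_append]
    constructor
    · rintro (rfl | ⟨H, hH, rfl⟩ | ⟨H, hH, rfl⟩)
      · exact ⟨_, Or.inl rfl, rfl⟩
      · exact ⟨H, Or.inr (Or.inl hH), rfl⟩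
      · exact ⟨H, Or.inr (Or.inr hH), rfl⟩
    · rintro ⟨H, (rfl | hH | hH), rfl⟩
      · exact Or.inl rfl
      · exact Or.inr (Or.inl ⟨H, hH, rfl⟩)
      · exact Or.inr (Or.inr ⟨H, hH, rfl⟩)

lemma Formula.names_subset_of_mem_subs {F G : Formula} (h : F ∈ G.subs) :
    F.names ⊆ G.names := by
  intro n hn
  obtain ⟨H, hH, e⟩ := Formula.mem_names_iff.1 hn
  exact Formula.mem_names_iff.2 ⟨H, (Formula.subs_sublist h).subset hH, e⟩

lemma subs_le_seqSubs {Γ : Sequent} {F : Formula} (h : HasSub Γ F) :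
    (F.subs : Multiset Formula) ≤ seqSubs Γ := by
  obtain ⟨G, hG, hF⟩ := Multiset.mem_bind.1 h
  exact le_trans (Multiset.coe_le.2 (Formula.subs_sublist (Multiset.mem_coe.1 hF)).subperm)
    (Multiset.le_bind Γ hG)

lemma hasSub_trans {Γ : Sequent} {F G : Formula} (hG : HasSub Γ G) (hF : F ∈ G.subs) :
    HasSub Γ F :=
  Multiset.mem_of_le (subs_le_seqSubs hG) (Multiset.mem_coe.2 hF)

lemma hasSub_of_mem {Γ : Sequent} {F : Formula} (h : F ∈ Γ) : HasSub Γ F :=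
  Multiset.mem_bind.2 ⟨F, h, Multiset.mem_coe.2 (Formula.mem_subs_self F)⟩

lemma name_inj {Γ : Sequent} (hW : WellNamed Γ) {F G : Formula}
    (h1 : HasSub Γ F) (h2 : HasSub Γ G) (e : F.name = G.name) : F = G :=
  Multiset.inj_on_of_nodup_map hW _ h1 _ h2 e

lemma nodup_subs_names {Γ : Sequent} (hW : WellNamed Γ) {F : Formula} (h : HasSub Γ F) :
    (F.subs.map Formula.name).Nodup := by
  have h1 : ((F.subs : Multiset Formula).map Formula.name) ≤ (seqSubs Γ).map Formula.name :=
    Multiset.map_le_map (subs_le_seqSubs h)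
  have h2 := Multiset.nodup_of_le h1 hW
  rwa [Multiset.map_coe, Multiset.coe_nodup] at h2

lemma mem_seqNames {Δ : Sequent} {n : ℕ} :
    n ∈ seqNames Δ ↔ ∃ F ∈ Δ, n ∈ F.names := by
  unfold seqNames
  induction Δ using Multiset.induction with
  | empty => simp
  | cons F Δ ih => simp [Multiset.sup_cons, ih]

lemma names_subset_seqNames {Δ : Sequent} {F : Formula} (h : F ∈ Δ) :
    F.names ⊆ seqNames Δ := fun n hn => mem_seqNames.2 ⟨F, h, hn⟩

lemma hasSub_names_subset {Γ : Sequent} {F : Formula} (h : HasSub Γ F) :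
    F.names ⊆ seqNames Γ := by
  obtain ⟨G, hG, hF⟩ := Multiset.mem_bind.1 h
  exact (Formula.names_subset_of_mem_subs (Multiset.mem_coe.1 hF)).trans
    (names_subset_seqNames hG)

lemma switchGraph_mono {Γ Δ : Sequent} (h : SubSeq Γ Δ) (lk : Linking) (σ : Switching) :
    switchGraph Δ lk σ ≤ switchGraph Γ lk σ := by
  have hsub : ∀ F, HasSub Δ F → HasSub Γ F := by
    intro F hF
    obtain ⟨G, hG, hFG⟩ := Multiset.mem_bind.1 hF
    exact hasSub_trans (h.1 G hG) (Multiset.mem_coe.1 hFG)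
  have hadj : ∀ a b, switchAdj Δ lk σ a b → switchAdj Γ lk σ a b := by
    intro a b hab
    rcases hab with ⟨A, B, h1, h2⟩ | ⟨A, B, h1, h2⟩ | ⟨h1, h2⟩
    · exact Or.inl ⟨A, B, hsub _ h1, h2⟩
    · exact Or.inr (Or.inl ⟨A, B, hsub _ h1, h2⟩)
    · exact Or.inr (Or.inr ⟨hsub _ h1, h2⟩)
  intro x y hxy
  rw [switchGraph, SimpleGraph.fromRel_adj] at hxy ⊢
  exact ⟨hxy.1, hxy.2.imp (hadj _ _) (hadj _ _)⟩

theorem exists_induce_walk {V : Type*} {G : SimpleGraph V} {s : Set V} :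
    ∀ {u v : V} (w : G.Walk u v), (∀ x ∈ w.support, x ∈ s) → ∀ (hu : u ∈ s) (hv : v ∈ s),
      ∃ p : (G.induce s).Walk ⟨u, hu⟩ ⟨v, hv⟩, ∀ x ∈ p.support, x.1 ∈ w.support
  | _, _, .nil, h, hu, hv => ⟨SimpleGraph.Walk.nil, by simp⟩
  | _, _, .cons (v := b) a w, h, hu, hv => by
    have hb : b ∈ s := h b (by simp)
    obtain ⟨p, hp⟩ := exists_induce_walk w (fun x hx => h x (by simp [hx])) hb hv
    refine ⟨SimpleGraph.Walk.cons (by simpa using a) p, ?_⟩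
    intro x hx
    rw [SimpleGraph.Walk.support_cons, List.mem_cons] at hx
    rw [SimpleGraph.Walk.support_cons, List.mem_cons]
    rcases hx with rfl | hx
    · exact Or.inl rfl
    · exact Or.inr (hp x hx)

end MLL
namespace MLL

lemma Formula.ne_tens_left (A B : Formula) (c : ℕ) : A ≠ Formula.tens c A B := by
  intro h
  have := congrArg sizeOf h
  simp at this
  all_goals omega

lemma Formula.ne_tens_right (A B : Formula) (c : ℕ) : B ≠ Formula.tens c A B := by
  intro h
  have := congrArg sizeOf h
  simp at this
  all_goals omega

lemma Formula.subs_cons (F : Formula) : ∃ l, F.subs = F :: l := by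
  cases F <;> exact ⟨_, rfl⟩

lemma tens_names_ne {Γ : Sequent} (hW : WellNamed Γ) {c : ℕ} {A B : Formula}
    (hT : HasSub Γ (.tens c A B)) :
    c ≠ A.name ∧ c ≠ B.name ∧ A.name ≠ B.name := by
  have hnd := nodup_subs_names hW hT
  have memA : Formula.name A ∈ A.subs.map Formula.name :=
    List.mem_map.2 ⟨A, A.mem_subs_self, rfl⟩
  have memB : Formula.name B ∈ B.subs.map Formula.name :=
    List.mem_map.2 ⟨B, B.mem_subs_self, rfl⟩
  rw [Formula.subs, List.map_cons, List.map_append, List.nodup_cons, List.nodup_append] at hnd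
  have hc1 : Formula.name (Formula.tens c A B) = c := rfl
  rw [hc1, List.mem_append] at hnd
  refine ⟨fun e => hnd.1 (Or.inl (e ▸ memA)), fun e => hnd.1 (Or.inr (e ▸ memB)), fun e => ?_⟩
  exact hnd.2.2.2 _ memA _ memB e

lemma seqNames_subset {Γ Δ : Sequent} (h : SubSeq Γ Δ) : seqNames Δ ⊆ seqNames Γ := by
  intro n hn
  obtain ⟨F, hF, hnF⟩ := mem_seqNames.1 hn
  exact hasSub_names_subset (h.1 F hF) hnF

lemma root_notMem {Γ : Sequent} (hW : WellNamed Γ) {T D : Formula}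
    (hT : HasSub Γ T) (hD : D ∈ T.subs) (hDT : D ≠ T) {Δ : Sequent} (hS : SubSeq Γ Δ)
    (hp : IsPort Δ D.name) : T.name ∉ seqNames Δ := by
  have hDΓ : HasSub Γ D := hasSub_trans hT hD
  obtain ⟨F', hF', hname⟩ := hp
  have hF'D : F' = D := name_inj hW (hS.1 F' hF') hDΓ hname
  have hDmem : D ∈ Δ := hF'D ▸ hF'
  intro hc
  obtain ⟨F, hF, hcF⟩ := mem_seqNames.1 hc
  obtain ⟨H, hH, hHname⟩ := Formula.mem_names_iff.1 hcF
  have hHT : T = H := (name_inj hW (hasSub_trans (hS.1 F hF) hH) hT hHname).symm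
  subst hHT
  by_cases hFD : F = D
  · subst hFD
    -- T ∈ F.subs and F ∈ T.subs, F ≠ T : contradiction by antisymmetry
    have h1 := Formula.subs_sublist hH
    have h2 := Formula.subs_sublist hD
    have heq : F.subs = T.subs := h2.eq_of_length_le h1.length_le
    obtain ⟨l1, e1⟩ := F.subs_cons
    obtain ⟨l2, e2⟩ := T.subs_cons
    rw [e1, e2] at heq
    exact hDT (List.cons.injEq .. ▸ heq).1
  · have hdisj : Disjoint D.names F.names :=
      by haveI : Std.Symm (fun A B : Formula => Disjoint A.names B.names) := ⟨fun a b h => h.symm⟩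
         exact Multiset.Pairwise.forall hS.2 hDmem hF (fun h => hFD h.symm)
    have hmem : D.name ∈ F.names :=
      Formula.names_subset_of_mem_subs hH (Formula.names_subset_of_mem_subs hD D.name_mem_names)
    exact Finset.disjoint_left.1 hdisj D.name_mem_names hmem

end MLL

open MLL in
/-- In a proof net, if `v` and `w` are joined by a tensor (they
are the roots of the two immediate subformulas of a tensor occurrence), then
any two subnets of which they are respective ports are disjoint. -/
theorem mll_tensor_disjoint_subnets {Γ : Sequent} (hW : WellNamed Γ)
    (lk : Linking) (hC : Correct Γ lk)
    {c : ℕ} {A B : Formula} (hT : HasSub Γ (.tens c A B))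
    {Δ₁ Δ₂ : Sequent} (h₁ : Subnet Γ lk Δ₁) (h₂ : Subnet Γ lk Δ₂)
    (hp₁ : IsPort Δ₁ A.name) (hp₂ : IsPort Δ₂ B.name) :
    Disjoint (seqNames Δ₁) (seqNames Δ₂) := by
  classical
  by_contra hdis
  obtain ⟨n, hn₁, hn₂⟩ := Finset.not_disjoint_iff.1 hdis
  obtain ⟨hne1, hne2, hne3⟩ := tens_names_ne hW hT
  have hTA : A ∈ (Formula.tens c A B).subs := by
    rw [Formula.subs]
    exact List.mem_cons_of_mem _ (List.mem_append.2 (Or.inl A.mem_subs_self))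
  have hTB : B ∈ (Formula.tens c A B).subs := by
    rw [Formula.subs]
    exact List.mem_cons_of_mem _ (List.mem_append.2 (Or.inr B.mem_subs_self))
  have hA : HasSub Γ A := hasSub_trans hT hTA
  have hB : HasSub Γ B := hasSub_trans hT hTB
  have hcΓ : c ∈ seqNames Γ := hasSub_names_subset hT ((Formula.tens c A B).name_mem_names)
  have hAΓ : A.name ∈ seqNames Γ := hasSub_names_subset hA A.name_mem_names
  have hBΓ : B.name ∈ seqNames Γ := hasSub_names_subset hB B.name_mem_names
  have hAΔ : A.name ∈ seqNames Δ₁ := by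
    obtain ⟨F, hF, e⟩ := hp₁
    exact mem_seqNames.2 ⟨F, hF, e ▸ F.name_mem_names⟩
  have hBΔ : B.name ∈ seqNames Δ₂ := by
    obtain ⟨F, hF, e⟩ := hp₂
    exact mem_seqNames.2 ⟨F, hF, e ▸ F.name_mem_names⟩
  have hc₁ : c ∉ seqNames Δ₁ := root_notMem hW hT hTA (A.ne_tens_left B c) h₁.1 hp₁
  have hc₂ : c ∉ seqNames Δ₂ := root_notMem hW hT hTB (Formula.ne_tens_right A B c) h₂.1 hp₂
  set σ : Switching := fun _ => true with hσ
  have hTree := hC.2 σ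
  have adj1 : ((switchGraph Γ lk σ).induce {x : ℕ | x ∈ seqNames Γ}).Adj ⟨A.name, hAΓ⟩ ⟨c, hcΓ⟩ := by
    show (switchGraph Γ lk σ).Adj A.name c
    rw [switchGraph, SimpleGraph.fromRel_adj]
    exact ⟨fun e => hne1 e.symm, Or.inr (Or.inl ⟨A, B, hT, Or.inl rfl⟩)⟩
  have adj2 : ((switchGraph Γ lk σ).induce {x : ℕ | x ∈ seqNames Γ}).Adj ⟨c, hcΓ⟩ ⟨B.name, hBΓ⟩ := by
    show (switchGraph Γ lk σ).Adj c B.name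
    rw [switchGraph, SimpleGraph.fromRel_adj]
    exact ⟨hne2, Or.inl (Or.inl ⟨A, B, hT, Or.inr rfl⟩)⟩
  set p₁ : ((switchGraph Γ lk σ).induce {x : ℕ | x ∈ seqNames Γ}).Walk ⟨A.name, hAΓ⟩ ⟨B.name, hBΓ⟩ :=
    SimpleGraph.Walk.cons adj1 (SimpleGraph.Walk.cons adj2 SimpleGraph.Walk.nil) with hp₁def
  have hp₁path : p₁.IsPath := by
    rw [SimpleGraph.Walk.isPath_def]
    simp [hp₁def, Subtype.ext_iff]
    exact ⟨⟨fun e => hne1 e.symm, hne3⟩, hne2⟩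
  have mk_walk : ∀ (Δ : Sequent), Subnet Γ lk Δ → ∀ (x y : ℕ), x ∈ seqNames Δ → y ∈ seqNames Δ →
      ∃ w : (switchGraph Γ lk σ).Walk x y, ∀ z ∈ w.support, z ∈ seqNames Δ := by
    intro Δ hS x y hx hy
    have htr := hS.2.2 σ
    obtain ⟨w0⟩ := htr.isConnected.preconnected ⟨x, hx⟩ ⟨y, hy⟩
    unfold Subnet at hS
    refine ⟨(w0.map (SimpleGraph.Embedding.induce _).toHom).mapLe (switchGraph_mono hS.1 lk σ), ?_⟩
    intro z hz
    replace hz : z ∈ ((w0.map (SimpleGraph.Embedding.induce {x : ℕ | x ∈ seqNames Δ}).toHom).mapLe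
        (switchGraph_mono hS.1 lk σ)).support := hz
    rw [SimpleGraph.Walk.support_mapLe_eq_support, SimpleGraph.Walk.support_map] at hz
    simp only [List.map_map, List.mem_map] at hz
    obtain ⟨q, hq, rfl⟩ := hz
    exact q.2
  obtain ⟨w₁, hw₁⟩ := mk_walk Δ₁ h₁ A.name n hAΔ hn₁
  obtain ⟨w₂, hw₂⟩ := mk_walk Δ₂ h₂ n B.name hn₂ hBΔ
  have hwsup : ∀ z ∈ (w₁.append w₂).support, z ∈ seqNames Δ₁ ∨ z ∈ seqNames Δ₂ := by
    intro z hz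
    rw [SimpleGraph.Walk.support_append, List.mem_append] at hz
    rcases hz with hz | hz
    · exact Or.inl (hw₁ z hz)
    · exact Or.inr (hw₂ z (List.mem_of_mem_tail hz))
  obtain ⟨p₂, hp₂sup⟩ := exists_induce_walk (s := {x : ℕ | x ∈ seqNames Γ}) (w₁.append w₂)
    (fun x hx => by
      rcases hwsup x hx with h | h
      · exact seqNames_subset h₁.1 h
      · exact seqNames_subset h₂.1 h)
    hAΓ hBΓ
  have heq : p₁ = (p₂.toPath : ((switchGraph Γ lk σ).induce {x : ℕ | x ∈ seqNames Γ}).Walk _ _) :=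
    (hTree.existsUnique_path ⟨A.name, hAΓ⟩ ⟨B.name, hBΓ⟩).unique hp₁path p₂.toPath.2
  have hcvc : (⟨c, hcΓ⟩ : {x : ℕ | x ∈ seqNames Γ}) ∈ p₁.support := by
    simp [hp₁def]
  rw [heq] at hcvc
  have hc2 := hp₂sup _ (SimpleGraph.Walk.support_toPath_subset p₂ hcvc)
  rcases hwsup c hc2 with h | h
  · exact hc₁ h
  · exact hc₂ h
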